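/- For any balanced bipartite graph G on 2n vertices, the signless Laplacian spectral radius satisfies q(G) ≤ e(G)/n + n. -/

import Mathlib

open SimpleGraph

attribute [local instance] Classical.propDecidable

/-- The (adjacency) spectral radius of a graph, as the largest adjacency eigenvalue. -/
noncomputable def specRad {V : Type*} [Fintype V] [DecidableEq V] (G : SimpleGraph V) : ℝ :=
  sSup (spectrum ℝ (G.adjMatrix ℝ))

/-- The signless Laplacian matrix `Q = D + A` of a graph. -/
noncomputable def signlessLaplacian {V : Type*} [Fintype V] [DecidableEq V]
    (G : SimpleGraph V) : Matrix V V ℝ :=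
  Matrix.diagonal (fun v => (G.degree v : ℝ)) + G.adjMatrix ℝ

/-- The signless Laplacian spectral radius of a graph. -/
noncomputable def qSpec {V : Type*} [Fintype V] [DecidableEq V] (G : SimpleGraph V) : ℝ :=
  sSup (spectrum ℝ (signlessLaplacian G))

/-- A graph is traceable if it has a Hamilton path. -/
def SimpleGraph.IsTraceable {V : Type*} (G : SimpleGraph V) : Prop :=
  ∃ (u v : V) (p : G.Walk u v), p.IsHamiltonian

/-- A graph on `Fin m ⊕ Fin n` is bipartite with bipartition `{Fin m, Fin n}`:
all edges go between the two parts. -/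
def CrossOnly {m n : ℕ} (G : SimpleGraph (Fin m ⊕ Fin n)) : Prop :=
  (∀ x y : Fin m, ¬ G.Adj (Sum.inl x) (Sum.inl y)) ∧
  (∀ x y : Fin n, ¬ G.Adj (Sum.inr x) (Sum.inr y))

/-- The graph `Q_n^k = K_{k,n-k-1} ⊔ Φ_{n-k,k+1}`: a vertex `inl x` with `x < k` is joined to
all of the right side, a vertex `inr y` with `y < n-k-1` is joined to all of the left side,
and there are no other edges. -/
def Qgraph (n k : ℕ) : SimpleGraph (Fin n ⊕ Fin n) :=
  SimpleGraph.fromRel (fun a b =>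
    match a, b with
    | Sum.inl x, Sum.inr y => x.val < k ∨ y.val < n - k - 1
    | _, _ => False)

/-- The graph `R_n^k = K_{k,k} ∪ K_{n-k,n-k}` (disjoint union). -/
def Rgraph (n k : ℕ) : SimpleGraph (Fin n ⊕ Fin n) :=
  SimpleGraph.fromRel (fun a b =>
    match a, b with
    | Sum.inl x, Sum.inr y => (x.val < k ∧ y.val < k) ∨ (k ≤ x.val ∧ k ≤ y.val)
    | _, _ => False)

/-- The graph `S_n^k = K_{k,n-k-1} ⊔ Φ_{n-k,k}` on parts of sizes `n` and `n-1`. -/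
def Sgraph (n k : ℕ) : SimpleGraph (Fin n ⊕ Fin (n - 1)) :=
  SimpleGraph.fromRel (fun a b =>
    match a, b with
    | Sum.inl x, Sum.inr y => x.val < k ∨ y.val < n - k - 1
    | _, _ => False)

/-- The quasi-complement of a bipartite graph: `inl x` and `inr y` are adjacent iff they are
nonadjacent in `G`; no edges inside the parts. -/
def quasiComplement {m n : ℕ} (G : SimpleGraph (Fin m ⊕ Fin n)) : SimpleGraph (Fin m ⊕ Fin n) :=
  SimpleGraph.fromRel (fun a b =>
    match a, b with
    | Sum.inl x, Sum.inr y => ¬ G.Adj (Sum.inl x) (Sum.inr y)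
    | _, _ => False)

/-- `G` is isomorphic to a subgraph of `H`. -/
def IsoSubgraph {V W : Type*} (G : SimpleGraph V) (H : SimpleGraph W) : Prop :=
  ∃ H' : SimpleGraph W, H' ≤ H ∧ Nonempty (G ≃g H')

lemma aux_side {n : ℕ} {G : SimpleGraph (Fin n ⊕ Fin n)} (hbip : CrossOnly G)
    {a b : Fin n ⊕ Fin n} (h : G.Adj a b) : a.isLeft = !b.isLeft := by
  cases a with
  | inl x => cases b with
    | inl y => exact absurd h (hbip.1 x y)
    | inr y => rfl
  | inr x => cases b with
    | inl y => rfl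
    | inr y => exact absurd h (hbip.2 x y)

lemma deg_le {n : ℕ} {G : SimpleGraph (Fin n ⊕ Fin n)} [DecidableRel G.Adj]
    (hbip : CrossOnly G) (v : Fin n ⊕ Fin n) : G.degree v ≤ n := by
  classical
  rw [← SimpleGraph.card_neighborFinset_eq_degree]
  cases v with
  | inl a =>
    have hsub : G.neighborFinset (Sum.inl a) ⊆ Finset.univ.image Sum.inr := by
      intro u hu
      rw [SimpleGraph.mem_neighborFinset] at hu
      cases u with
      | inl b => exact absurd hu (hbip.1 a b)
      | inr b => exact Finset.mem_image.2 ⟨b, Finset.mem_univ _, rfl⟩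
    calc (G.neighborFinset (Sum.inl a)).card ≤ _ := Finset.card_le_card hsub
      _ ≤ (Finset.univ : Finset (Fin n)).card := Finset.card_image_le
      _ = n := by simp
  | inr a =>
    have hsub : G.neighborFinset (Sum.inr a) ⊆ Finset.univ.image Sum.inl := by
      intro u hu
      rw [SimpleGraph.mem_neighborFinset] at hu
      cases u with
      | inl b => exact Finset.mem_image.2 ⟨b, Finset.mem_univ _, rfl⟩
      | inr b => exact absurd hu (hbip.2 a b)
    calc (G.neighborFinset (Sum.inr a)).card ≤ _ := Finset.card_le_card hsub
      _ ≤ (Finset.univ : Finset (Fin n)).card := Finset.card_image_le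
      _ = n := by simp

lemma sum_deg_nbr_le {n : ℕ} {G : SimpleGraph (Fin n ⊕ Fin n)} [DecidableRel G.Adj]
    (hbip : CrossOnly G) (v : Fin n ⊕ Fin n) :
    ∑ u ∈ G.neighborFinset v, G.degree u ≤ G.edgeFinset.card := by
  classical
  have key : ∑ u ∈ G.neighborFinset v, G.degree u
      = ((G.neighborFinset v).sigma (fun u => G.neighborFinset u)).card := by
    rw [Finset.card_sigma]
    exact Finset.sum_congr rfl fun u _ => (SimpleGraph.card_neighborFinset_eq_degree G u).symm
  rw [key]
  apply Finset.card_le_card_of_injOn (fun p => s(p.1, p.2))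
  · intro p hp
    rw [Finset.mem_coe, Finset.mem_sigma] at hp
    rw [Finset.mem_coe, SimpleGraph.mem_edgeFinset, SimpleGraph.mem_edgeSet]
    exact (SimpleGraph.mem_neighborFinset _ _ _).1 hp.2
  · intro p hp q hq hpq
    simp only [Finset.coe_sigma, Set.mem_sigma_iff, Finset.mem_coe,
      SimpleGraph.mem_neighborFinset] at hp hq
    have h1 : G.Adj v p.1 := hp.1
    have h2 : G.Adj p.1 p.2 := hp.2
    have h3 : G.Adj v q.1 := hq.1
    have h4 : G.Adj q.1 q.2 := hq.2
    have := Sym2.eq_iff.mp hpq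
    rcases this with ⟨hx, hy⟩ | ⟨hx, hy⟩
    · exact Sigma.ext hx (heq_of_eq hy)
    · -- p.1 = q.2, sides contradiction
      exfalso
      have s1 : (p.1 : Fin n ⊕ Fin n).isLeft = !v.isLeft := aux_side hbip h1.symm
      have hA := aux_side hbip h3
      have hB := aux_side hbip h4
      have s2 : (q.2 : Fin n ⊕ Fin n).isLeft = v.isLeft := by
        rw [hA, hB, Bool.not_not]
      rw [hx, s2] at s1
      cases v <;> simp at s1


/-- For a balanced bipartite graph `G` on `2n` vertices, `q(G) ≤ e(G)/n + n`. -/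
theorem stmt_3 (n : ℕ) (G : SimpleGraph (Fin n ⊕ Fin n)) (hbip : CrossOnly G) :
    qSpec G ≤ (G.edgeFinset.card : ℝ) / n + n := by
  classical
  have hRHS : (0:ℝ) ≤ (G.edgeFinset.card : ℝ) / n + n := by positivity
  rw [qSpec]
  rcases Set.eq_empty_or_nonempty (spectrum ℝ (signlessLaplacian G)) with hs | hs
  · rw [hs, Real.sSup_empty]; exact hRHS
  refine csSup_le hs fun lam hlam => ?_
  rcases le_or_gt lam 0 with h0 | h0
  · exact h0.trans hRHS
  have hn : 0 < n := by
    rcases Nat.eq_zero_or_pos n with rfl | hn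
    · exfalso
      haveI : Subsingleton (Matrix (Fin 0 ⊕ Fin 0) (Fin 0 ⊕ Fin 0) ℝ) :=
        ⟨fun a b => by ext i j; exact isEmptyElim i⟩
      exact (spectrum.mem_iff.mp hlam) (isUnit_of_subsingleton _)
    · exact hn
  have hnpos : (0:ℝ) < n := by exact_mod_cast hn
  have hnR : (1:ℝ) ≤ n := by exact_mod_cast hn
  rw [spectrum.mem_iff] at hlam
  have hdet : (algebraMap ℝ (Matrix (Fin n ⊕ Fin n) (Fin n ⊕ Fin n) ℝ) lam
      - signlessLaplacian G).det = 0 := by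
    by_contra hd
    exact hlam ((Matrix.isUnit_iff_isUnit_det _).2 (isUnit_iff_ne_zero.2 hd))
  obtain ⟨x, hx0, hxe⟩ := Matrix.exists_mulVec_eq_zero_iff.mpr hdet
  set d : (Fin n ⊕ Fin n) → ℝ := fun v => (G.degree v : ℝ) with hd
  have heig : ∀ v, lam * x v = d v * x v + ∑ u ∈ G.neighborFinset v, x u := by
    intro v
    have h := congrFun hxe v
    rw [Matrix.sub_mulVec] at h
    have h1 : Matrix.mulVec (algebraMap ℝ (Matrix (Fin n ⊕ Fin n) (Fin n ⊕ Fin n) ℝ) lam) x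
        = lam • x := by
      rw [Algebra.algebraMap_eq_smul_one, Matrix.smul_mulVec, Matrix.one_mulVec]
    rw [h1] at h
    have h2 : Matrix.mulVec (signlessLaplacian G) x v
        = d v * x v + ∑ u ∈ G.neighborFinset v, x u := by
      rw [signlessLaplacian, Matrix.add_mulVec]
      simp [Matrix.mulVec_diagonal, hd]
    simp only [Pi.sub_apply, Pi.zero_apply, Pi.smul_apply, smul_eq_mul] at h
    rw [h2] at h
    linarith
  set y : (Fin n ⊕ Fin n) → ℝ := fun v => |x v| with hy
  have hdnn : ∀ v, (0:ℝ) ≤ d v := fun v => Nat.cast_nonneg _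
  have hyineq : ∀ v, lam * y v ≤ d v * y v + ∑ u ∈ G.neighborFinset v, y u := by
    intro v
    have habs : lam * y v = |lam * x v| := by
      rw [abs_mul, abs_of_pos h0]
    rw [habs, heig v]
    calc |d v * x v + ∑ u ∈ G.neighborFinset v, x u|
        ≤ |d v * x v| + |∑ u ∈ G.neighborFinset v, x u| := abs_add_le _ _
      _ ≤ d v * y v + ∑ u ∈ G.neighborFinset v, y u := by
          refine add_le_add (le_of_eq ?_) (Finset.abs_sum_le_sum_abs _ _)
          rw [abs_mul, abs_of_nonneg (hdnn v)]
  set z : (Fin n ⊕ Fin n) → ℝ := fun v => max (d v) 1 with hz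
  have hzpos : ∀ v, (0:ℝ) < z v := fun v => lt_of_lt_of_le one_pos (le_max_right _ _)
  obtain ⟨v₀, -, hv₀⟩ := Finset.exists_max_image Finset.univ (fun v => y v / z v)
    ⟨Sum.inl ⟨0, hn⟩, Finset.mem_univ _⟩
  set c : ℝ := y v₀ / z v₀ with hc
  have hyc : ∀ u, y u ≤ c * z u := fun u =>
    (div_le_iff₀ (hzpos u)).1 (hv₀ u (Finset.mem_univ u)) |>.trans (by rw [mul_comm])
  have hcpos : 0 < c := by
    obtain ⟨w, hw⟩ := Function.ne_iff.mp hx0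
    have hyw : 0 < y w := abs_pos.2 hw
    calc (0:ℝ) < y w / z w := div_pos hyw (hzpos w)
      _ ≤ c := hv₀ w (Finset.mem_univ w)
  have hyv₀ : y v₀ = c * z v₀ := by
    rw [hc, div_mul_cancel₀ _ (hzpos v₀).ne']
  have hd₀pos : (0:ℝ) < d v₀ := by
    by_contra hnp
    push_neg at hnp
    have hdz : d v₀ = 0 := le_antisymm hnp (hdnn v₀)
    have hdeg : (G.neighborFinset v₀).card = 0 := by
      rw [SimpleGraph.card_neighborFinset_eq_degree]
      simp only [hd] at hdz
      exact_mod_cast hdz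
    have hN : G.neighborFinset v₀ = ∅ := Finset.card_eq_zero.mp hdeg
    have h1 := hyineq v₀
    rw [hdz, hN] at h1
    simp at h1
    nlinarith [mul_pos hcpos (hzpos v₀), hyv₀, mul_pos h0 (mul_pos hcpos (hzpos v₀))]
  have hd₀1 : (1:ℝ) ≤ d v₀ := by
    simp only [hd] at hd₀pos ⊢
    have h' : 0 < G.degree v₀ := by exact_mod_cast hd₀pos
    exact_mod_cast h'
  have hzv₀ : z v₀ = d v₀ := max_eq_left hd₀1
  have hnbr : ∀ u ∈ G.neighborFinset v₀, z u = d u := by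
    intro u hu
    have hadj : G.Adj u v₀ := ((SimpleGraph.mem_neighborFinset _ _ _).1 hu).symm
    have hdu : 0 < G.degree u := (SimpleGraph.degree_pos_iff_exists_adj G u).2 ⟨v₀, hadj⟩
    refine max_eq_left ?_
    simp only [hd]
    exact_mod_cast hdu
  set S : ℝ := ∑ u ∈ G.neighborFinset v₀, d u with hS
  have hmain : lam * (c * d v₀) ≤ d v₀ * (c * d v₀) + c * S := by
    have h1 := hyineq v₀
    rw [hyv₀, hzv₀] at h1
    have h2 : ∑ u ∈ G.neighborFinset v₀, y u ≤ c * S := by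
      rw [hS, Finset.mul_sum]
      refine Finset.sum_le_sum fun u hu => ?_
      rw [← hnbr u hu]
      exact hyc u
    linarith
  have hkey : lam * d v₀ ≤ d v₀ * d v₀ + S := by
    have h2 : c * (lam * d v₀) ≤ c * (d v₀ * d v₀ + S) := by
      ring_nf at hmain ⊢; linarith
    exact le_of_mul_le_mul_left h2 hcpos
  have hSe : S ≤ (G.edgeFinset.card : ℝ) := by
    rw [hS]
    have hnat := sum_deg_nbr_le hbip v₀
    calc ∑ u ∈ G.neighborFinset v₀, d u
        = ((∑ u ∈ G.neighborFinset v₀, G.degree u : ℕ) : ℝ) := by push_cast [hd]; rfl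
      _ ≤ (G.edgeFinset.card : ℝ) := by exact_mod_cast hnat
  have hSnd : S ≤ n * d v₀ := by
    rw [hS]
    calc ∑ u ∈ G.neighborFinset v₀, d u
        ≤ ∑ _u ∈ G.neighborFinset v₀, (n:ℝ) :=
          Finset.sum_le_sum fun u _ => by simp only [hd]; exact_mod_cast deg_le hbip u
      _ = (G.neighborFinset v₀).card * n := by
          rw [Finset.sum_const, nsmul_eq_mul]
      _ = d v₀ * n := by simp only [hd, SimpleGraph.card_neighborFinset_eq_degree]
      _ = n * d v₀ := mul_comm _ _
  have hdn : d v₀ ≤ n := by simp only [hd]; exact_mod_cast deg_le hbip v₀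
  set e : ℝ := (G.edgeFinset.card : ℝ) with he
  have hepos : 0 ≤ e := Nat.cast_nonneg _
  have hgoal : e / n + (n:ℝ) = (e + n * n) / n := by field_simp
  rw [hgoal, le_div_iff₀ hnpos]
  rcases le_total e ((n:ℝ) * d v₀) with hcase | hcase
  · nlinarith [hkey, hSe, hd₀pos, hd₀1,
      mul_nonneg (sub_nonneg.2 hdn) (sub_nonneg.2 hcase),
      mul_le_mul_of_nonneg_left hkey hnpos.le,
      mul_le_mul_of_nonneg_left hSe hnpos.le]
  · nlinarith [hkey, hSnd, hcase, hd₀pos, hd₀1, hdn, hnpos,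
      mul_le_mul_of_nonneg_left hkey hnpos.le,
      mul_le_mul_of_nonneg_left hSnd hnpos.le]
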